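/- Let (V, Q) be a finite-dimensional quadratic space over a field K whose polar form B has trivial radical. A generalized orthogonal set is a linearly independent set S of vectors containing some disjoint pairs (u,v) with B(u,u) = B(v,v) = 0 and B(u,v) = 1 (symplectic couples), such that any two vectors of S not forming one of these couples are orthogonal. Then any generalized orthogonal set extends to a generalized orthogonal basis of V. -/

import Mathlib

open QuadraticMap

/-- `S` is a generalized orthogonal set with set of symplectic couples `C`
for the polar form of `Q`. -/
def IsGenOrthSet {K V : Type*} [Field K] [AddCommGroup V] [Module K V]
    (Q : QuadraticForm K V) (S : Set V) (C : Set (V × V)) : Prop :=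
  (∀ p ∈ C, p.1 ∈ S ∧ p.2 ∈ S ∧ p.1 ≠ p.2 ∧
      polar Q p.1 p.1 = 0 ∧ polar Q p.2 p.2 = 0 ∧ polar Q p.1 p.2 = 1) ∧
  (∀ p ∈ C, ∀ q ∈ C, p ≠ q →
      p.1 ≠ q.1 ∧ p.1 ≠ q.2 ∧ p.2 ≠ q.1 ∧ p.2 ≠ q.2) ∧
  (∀ u ∈ S, ∀ v ∈ S, u ≠ v → (u, v) ∉ C → (v, u) ∉ C → polar Q u v = 0)

section helpers
variable {K V : Type*} [Field K] [AddCommGroup V] [Module K V]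
  {Q : QuadraticForm K V} {S : Set V} {C : Set (V × V)}

lemma IsGenOrthSet.unpaired_orth (hS : IsGenOrthSet Q S C) {s t : V}
    (hs : s ∈ S) (ht : t ∈ S) (hup : ∀ p ∈ C, p.1 ≠ t ∧ p.2 ≠ t) (hne : s ≠ t) :
    polar Q s t = 0 :=
  hS.2.2 s hs t ht hne (fun h => (hup _ h).2 rfl) (fun h => (hup _ h).1 rfl)

lemma IsGenOrthSet.unpaired_of_aniso (hS : IsGenOrthSet Q S C) {s : V}
    (hiso : polar Q s s ≠ 0) : ∀ p ∈ C, p.1 ≠ s ∧ p.2 ≠ s := by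
  intro p hp
  obtain ⟨-, -, -, h1, h2, -⟩ := hS.1 p hp
  exact ⟨fun h => hiso (h ▸ h1), fun h => hiso (h ▸ h2)⟩

lemma IsGenOrthSet.orth_fst (hS : IsGenOrthSet Q S C) {p : V × V} (hp : p ∈ C)
    {s : V} (hs : s ∈ S) (h1 : s ≠ p.1) (h2 : s ≠ p.2) : polar Q s p.1 = 0 := by
  obtain ⟨hp1, hp2, -, -, -, -⟩ := hS.1 p hp
  refine hS.2.2 s hs p.1 hp1 h1 (fun h => ?_) (fun h => ?_)
  · exact (hS.2.1 _ h p hp (fun he => h1 (congrArg Prod.fst he))).2.2.1 rfl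
  · exact (hS.2.1 _ h p hp (fun he => h2 (congrArg Prod.snd he))).1 rfl

lemma IsGenOrthSet.orth_snd (hS : IsGenOrthSet Q S C) {p : V × V} (hp : p ∈ C)
    {s : V} (hs : s ∈ S) (h1 : s ≠ p.1) (h2 : s ≠ p.2) : polar Q s p.2 = 0 := by
  obtain ⟨hp1, hp2, -, -, -, -⟩ := hS.1 p hp
  refine hS.2.2 s hs p.2 hp2 h2 (fun h => ?_) (fun h => ?_)
  · exact (hS.2.1 _ h p hp (fun he => h1 (congrArg Prod.fst he))).2.2.2 rfl
  · exact (hS.2.1 _ h p hp (fun he => h2 (congrArg Prod.snd he))).2.1 rfl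

end helpers

lemma exists_polar_dual {K V : Type*} [Field K] [AddCommGroup V] [Module K V]
    [FiniteDimensional K V] (Q : QuadraticForm K V)
    (hnd : ∀ v : V, (∀ u : V, polar Q v u = 0) → v = 0)
    (W : Submodule K V) (f : Module.Dual K W) :
    ∃ v : V, ∀ w : W, polar Q v (w : V) = f w := by
  have hinj : Function.Injective (polarBilin Q) := by
    rw [← LinearMap.ker_eq_bot, eq_bot_iff]
    intro v hv
    have : polarBilin Q v = 0 := hv
    have : v = 0 := hnd v fun u => by
      simpa using congrArg (fun g => g u) this
    simp [this]
  have hsurj := (LinearMap.injective_iff_surjective_of_finrank_eq_finrank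
    (Subspace.dual_finrank_eq).symm).mp hinj
  obtain ⟨g, hg⟩ := Subspace.dualRestrict_surjective f
  obtain ⟨v, hv⟩ := hsurj g
  refine ⟨v, fun w => ?_⟩
  have : W.dualRestrict g w = f w := by rw [hg]
  rw [Submodule.dualRestrict_apply] at this
  rw [← polarBilin_apply_apply, hv, this]

lemma exists_pairing {K V : Type*} [Field K] [AddCommGroup V] [Module K V]
    [FiniteDimensional K V] (Q : QuadraticForm K V)
    (hnd : ∀ v : V, (∀ u : V, polar Q v u = 0) → v = 0)
    (S : Set V) (hSind : LinearIndependent K ((↑) : S → V))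
    (x₀ : V) (hx₀ : x₀ ∈ S) :
    ∃ y : V, (∀ s ∈ S, s ≠ x₀ → polar Q y s = 0) ∧ polar Q y x₀ = 1 := by
  classical
  set W := Submodule.span K (Set.range ((↑) : S → V)) with hW
  let b : Module.Basis S K W := Module.Basis.span hSind
  obtain ⟨y, hy⟩ := exists_polar_dual Q hnd W (b.coord ⟨x₀, hx₀⟩)
  have key : ∀ (s : V) (hs : s ∈ S), polar Q y s = if (⟨s, hs⟩ : S) = ⟨x₀, hx₀⟩ then 1 else 0 := by
    intro s hs
    have hsW : s ∈ W := Submodule.subset_span ⟨⟨s, hs⟩, rfl⟩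
    have hb : b ⟨s, hs⟩ = (⟨s, hsW⟩ : W) := by
      ext; exact congrArg Subtype.val (Module.Basis.span_apply hSind ⟨s, hs⟩)
    have := hy ⟨s, hsW⟩
    rw [← hb] at this
    rw [show polar Q y s = polar Q y ((b ⟨s, hs⟩ : W) : V) by rw [hb], this,
      Module.Basis.coord_apply, Module.Basis.repr_self, Finsupp.single_apply]
  refine ⟨y, fun s hs hne => ?_, ?_⟩
  · rw [key s hs, if_neg (by simp [hne])]
  · rw [key x₀ hx₀, if_pos rfl]

lemma exists_orth_notmem {K V : Type*} [Field K] [AddCommGroup V] [Module K V]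
    [FiniteDimensional K V] (Q : QuadraticForm K V)
    (hnd : ∀ v : V, (∀ u : V, polar Q v u = 0) → v = 0)
    {S : Set V} {C : Set (V × V)} (hS : IsGenOrthSet Q S C)
    (hB : ∀ s ∈ S, polar Q s s = 0 → ∃ p ∈ C, s = p.1 ∨ s = p.2)
    (hW : Submodule.span K S ≠ ⊤) :
    ∃ w : V, w ∉ Submodule.span K S ∧ ∀ s ∈ S, polar Q w s = 0 := by
  classical
  set W := Submodule.span K S with hWdef
  set φ : V →ₗ[K] Module.Dual K W := W.dualRestrict.comp (polarBilin Q) with hφdef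
  have hinj : Function.Injective (polarBilin Q) := by
    rw [← LinearMap.ker_eq_bot, eq_bot_iff]
    intro v hv
    have h0 : polarBilin Q v = 0 := hv
    have : v = 0 := hnd v fun u => by simpa using congrArg (fun g => g u) h0
    simp [this]
  have hsurj : Function.Surjective (polarBilin Q) :=
    (LinearMap.injective_iff_surjective_of_finrank_eq_finrank
      (Subspace.dual_finrank_eq).symm).mp hinj
  have hφs : Function.Surjective φ := by
    rw [hφdef, LinearMap.coe_comp]
    exact (Subspace.dualRestrict_surjective).comp hsurj
  -- the kernel of φ meets W trivially
  have hdisj : ∀ x, x ∈ LinearMap.ker φ → x ∈ W → x = 0 := by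
    intro x hxk hxW
    have horth : ∀ u ∈ W, polar Q x u = 0 := by
      intro u hu
      have h0 : φ x = 0 := hxk
      have := congrArg (fun g => g (⟨u, hu⟩ : W)) h0
      simpa [hφdef, Submodule.dualRestrict_apply] using this
    obtain ⟨c, hcsupp, hcsum⟩ := Submodule.mem_span_set.mp hxW
    have hsum : ∀ t : V, (c.sum fun s a => a * polar Q s t) = polar Q x t := by
      intro t
      rw [← hcsum]
      calc (c.sum fun s a => a * polar Q s t)
          = c.sum fun s a => ((polarBilin Q).flip t) (a • s) := by
            apply Finsupp.sum_congr
            intro s _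
            rw [_root_.map_smul, smul_eq_mul, LinearMap.flip_apply, polarBilin_apply_apply]
        _ = ((polarBilin Q).flip t) (c.sum fun mi r => r • mi) :=
            (_root_.map_finsuppSum _ _ _).symm
        _ = polar Q (c.sum fun mi r => r • mi) t := by
            rw [LinearMap.flip_apply, polarBilin_apply_apply]
    have hc0 : ∀ s₀, c s₀ = 0 := by
      intro s₀
      by_cases hs₀ : s₀ ∈ c.support
      swap
      · exact Finsupp.notMem_support_iff.mp hs₀
      have hs₀S : s₀ ∈ S := hcsupp hs₀
      by_cases hiso : polar Q s₀ s₀ = 0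
      · obtain ⟨p, hp, hcase⟩ := hB s₀ hs₀S hiso
        obtain ⟨hp1, hp2, hpne, hq1, hq2, hq3⟩ := hS.1 p hp
        rcases hcase with rfl | rfl
        · have h0 : (c.sum fun s a => a * polar Q s p.2) = 0 := by
            rw [hsum]; exact horth p.2 (Submodule.subset_span hp2)
          rw [Finsupp.sum_eq_single p.1
            (fun b hb hbne => ?_) (fun _ => zero_mul _)] at h0
          · rwa [hq3, mul_one] at h0
          · rcases eq_or_ne b p.2 with rfl | hbne2
            · rw [hq2, mul_zero]
            · rw [hS.orth_snd hp (hcsupp (Finsupp.mem_support_iff.mpr hb)) hbne hbne2,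
                mul_zero]
        · have h0 : (c.sum fun s a => a * polar Q s p.1) = 0 := by
            rw [hsum]; exact horth p.1 (Submodule.subset_span hp1)
          rw [Finsupp.sum_eq_single p.2
            (fun b hb hbne => ?_) (fun _ => zero_mul _)] at h0
          · rwa [polar_comm, hq3, mul_one] at h0
          · rcases eq_or_ne b p.1 with rfl | hbne1
            · rw [hq1, mul_zero]
            · rw [hS.orth_fst hp (hcsupp (Finsupp.mem_support_iff.mpr hb)) hbne1 hbne,
                mul_zero]
      · have hup := hS.unpaired_of_aniso hiso
        have h0 : (c.sum fun s a => a * polar Q s s₀) = 0 := by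
          rw [hsum]; exact horth s₀ (Submodule.subset_span hs₀S)
        rw [Finsupp.sum_eq_single s₀
          (fun b hb hbne => ?_) (fun _ => zero_mul _)] at h0
        · exact (mul_eq_zero.mp h0).resolve_right hiso
        · rw [hS.unpaired_orth (hcsupp (Finsupp.mem_support_iff.mpr hb)) hs₀S hup hbne,
            mul_zero]
    have : c = 0 := Finsupp.ext hc0
    rw [← hcsum, this, Finsupp.sum_zero_index]
  -- the kernel is nontrivial
  have hk_ne : LinearMap.ker φ ≠ ⊥ := by
    intro hbot
    have h1 := LinearMap.finrank_range_add_finrank_ker φ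
    rw [LinearMap.range_eq_top.mpr hφs, hbot, finrank_bot] at h1
    have h2 : Module.finrank K (Module.Dual K W) = Module.finrank K W :=
      Subspace.dual_finrank_eq
    have h3 : Module.finrank K W < Module.finrank K V :=
      Submodule.finrank_lt hW
    rw [finrank_top] at h1
    omega
  have hnle : ¬ LinearMap.ker φ ≤ W := by
    intro hle
    apply hk_ne
    rw [eq_bot_iff]
    intro x hx
    rw [Submodule.mem_bot]
    exact hdisj x hx (hle hx)
  obtain ⟨w, hwk, hwW⟩ := SetLike.not_le_iff_exists.mp hnle
  refine ⟨w, hwW, fun s hs => ?_⟩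
  have h0 : φ w = 0 := hwk
  have := congrArg (fun g => g (⟨s, Submodule.subset_span hs⟩ : W)) h0
  simpa [hφdef, Submodule.dualRestrict_apply] using this

theorem stmt4 {K V : Type*} [Field K] [AddCommGroup V] [Module K V]
    [FiniteDimensional K V] (Q : QuadraticForm K V)
    (hnd : ∀ v : V, (∀ u : V, polar Q v u = 0) → v = 0)
    (S : Set V) (C : Set (V × V))
    (hSind : LinearIndependent K ((↑) : S → V))
    (hS : IsGenOrthSet Q S C) :
    ∃ (T : Set V) (C' : Set (V × V)), S ⊆ T ∧ C ⊆ C' ∧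
      IsGenOrthSet Q T C' ∧ LinearIndependent K ((↑) : T → V) ∧
      Submodule.span K T = ⊤ := by
  classical
  suffices H : ∀ (n : ℕ) (S : Set V) (C : Set (V × V)),
      LinearIndependent K ((↑) : S → V) → IsGenOrthSet Q S C →
      Module.finrank K V - Module.finrank K (Submodule.span K S) ≤ n →
      ∃ (T : Set V) (C' : Set (V × V)), S ⊆ T ∧ C ⊆ C' ∧
        IsGenOrthSet Q T C' ∧ LinearIndependent K ((↑) : T → V) ∧
        Submodule.span K T = ⊤ from
    H _ S C hSind hS le_rfl
  intro n
  induction n with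
  | zero =>
    intro S C hind hgen hle
    have h1 : Module.finrank K (Submodule.span K S) ≤ Module.finrank K V :=
      Submodule.finrank_le _
    have h2 : Module.finrank K (Submodule.span K S) = Module.finrank K V := by omega
    exact ⟨S, C, subset_rfl, subset_rfl, hgen, hind, Submodule.eq_top_of_finrank_eq h2⟩
  | succ n ih =>
    intro S C hind hgen hle
    by_cases htop : Submodule.span K S = ⊤
    · exact ⟨S, C, subset_rfl, subset_rfl, hgen, hind, htop⟩
    by_cases hA : ∃ x₀ ∈ S, polar Q x₀ x₀ = 0 ∧ ∀ p ∈ C, p.1 ≠ x₀ ∧ p.2 ≠ x₀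
    · -- Case A : pair an unpaired isotropic vector
      obtain ⟨x₀, hx₀S, hx₀iso, hx₀up⟩ := hA
      obtain ⟨y, hy0, hy1⟩ := exists_pairing Q hnd S hind x₀ hx₀S
      set y' : V := y - Q y • x₀ with hy'def
      have horthx₀ : ∀ w ∈ Submodule.span K S, polar Q w x₀ = 0 := by
        intro w hw
        have hle' : Submodule.span K S ≤ LinearMap.ker ((polarBilin Q).flip x₀) := by
          rw [Submodule.span_le]
          intro s hs
          rw [SetLike.mem_coe, LinearMap.mem_ker, LinearMap.flip_apply,
            polarBilin_apply_apply]
          rcases eq_or_ne s x₀ with rfl | hne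
          · exact hx₀iso
          · exact hgen.unpaired_orth hs hx₀S hx₀up hne
        have := hle' hw
        rwa [LinearMap.mem_ker, LinearMap.flip_apply, polarBilin_apply_apply] at this
      have hy'x₀ : polar Q y' x₀ = 1 := by
        rw [hy'def, polar_sub_left, polar_smul_left, hx₀iso, smul_zero, sub_zero, hy1]
      have hy'W : y' ∉ Submodule.span K S := fun h => by
        have := horthx₀ y' h
        rw [hy'x₀] at this
        exact one_ne_zero this
      have hy'S : y' ∉ S := fun h => hy'W (Submodule.subset_span h)
      have hy'orth : ∀ s ∈ S, s ≠ x₀ → polar Q y' s = 0 := by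
        intro s hs hne
        have h1 : polar Q x₀ s = 0 :=
          (polar_comm _ _ _).trans (hgen.unpaired_orth hs hx₀S hx₀up hne)
        rw [hy'def, polar_sub_left, hy0 s hs hne, polar_smul_left, h1, smul_zero,
          sub_zero]
      have hx₀y : polar Q x₀ y = 1 := (polar_comm _ _ _).trans hy1
      have hy'y' : polar Q y' y' = 0 := by
        rw [hy'def, polar_sub_left, polar_sub_right, polar_sub_right, polar_smul_left,
          polar_smul_left, polar_smul_right, polar_smul_right, hy1, hx₀y, hx₀iso,
          polar_self]
        simp [two_smul, smul_eq_mul]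
      have hx₀y' : polar Q x₀ y' = 1 := (polar_comm _ _ _).trans hy'x₀
      have hx₀ne : x₀ ≠ y' := fun h => hy'S (h ▸ hx₀S)
      -- the new generalized orthogonal set
      have hgen' : IsGenOrthSet Q (insert y' S) (insert (x₀, y') C) := by
        refine ⟨?_, ?_, ?_⟩
        · intro p hp
          rcases Set.mem_insert_iff.mp hp with rfl | hp
          · exact ⟨Set.mem_insert_iff.mpr (Or.inr hx₀S), Set.mem_insert _ _, hx₀ne,
              hx₀iso, hy'y', hx₀y'⟩
          · obtain ⟨h1, h2, h3, h4, h5, h6⟩ := hgen.1 p hp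
            exact ⟨Set.mem_insert_iff.mpr (Or.inr h1),
              Set.mem_insert_iff.mpr (Or.inr h2), h3, h4, h5, h6⟩
        · intro p hp q hq hne
          rcases Set.mem_insert_iff.mp hp with rfl | hp <;>
            rcases Set.mem_insert_iff.mp hq with rfl | hq
          · exact absurd rfl hne
          · obtain ⟨hq1, hq2, -, -, -, -⟩ := hgen.1 q hq
            exact ⟨(hx₀up q hq).1.symm, (hx₀up q hq).2.symm,
              fun h => hy'S (by rw [← h] at hq1; exact hq1),
              fun h => hy'S (by rw [← h] at hq2; exact hq2)⟩
          · obtain ⟨hp1, hp2, -, -, -, -⟩ := hgen.1 p hp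
            exact ⟨(hx₀up p hp).1, fun h => hy'S (by rw [h] at hp1; exact hp1),
              (hx₀up p hp).2, fun h => hy'S (by rw [h] at hp2; exact hp2)⟩
          · exact hgen.2.1 p hp q hq hne
        · intro u hu v hv hne hnc1 hnc2
          rcases Set.mem_insert_iff.mp hu with hu' | hu' <;>
            rcases Set.mem_insert_iff.mp hv with hv' | hv'
          · exact absurd (hu'.trans hv'.symm) hne
          · rcases eq_or_ne v x₀ with rfl | hvne
            · exact absurd (by rw [hu']; exact Set.mem_insert _ _) hnc2
            · rw [hu']; exact hy'orth v hv' hvne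
          · rcases eq_or_ne u x₀ with rfl | hune
            · exact absurd (by rw [hv']; exact Set.mem_insert _ _) hnc1
            · rw [hv']; exact (polar_comm _ _ _).trans (hy'orth u hu' hune)
          · exact hgen.2.2 u hu' v hv' hne
              (fun h => hnc1 (Set.mem_insert_iff.mpr (Or.inr h)))
              (fun h => hnc2 (Set.mem_insert_iff.mpr (Or.inr h)))
      have hind' : LinearIndependent K (fun b : (insert y' S : Set V) => (b : V)) :=
        LinearIndepOn.id_insert hind hy'W
      have hlt : Module.finrank K (Submodule.span K S) <
          Module.finrank K (Submodule.span K (insert y' S)) := by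
        apply Submodule.finrank_lt_finrank_of_lt
        refine lt_of_le_of_ne (Submodule.span_mono (Set.subset_insert _ _)) ?_
        intro h
        exact hy'W (h ▸ Submodule.subset_span (Set.mem_insert _ _))
      have hle' : Module.finrank K V -
          Module.finrank K (Submodule.span K (insert y' S)) ≤ n := by
        have := Submodule.finrank_le (Submodule.span K (insert y' S : Set V))
        omega
      obtain ⟨T, C'', hT1, hT2, hT3, hT4, hT5⟩ := ih (insert y' S) (insert (x₀, y') C)
        hind' hgen' hle'
      exact ⟨T, C'', (Set.subset_insert _ _).trans hT1,
        (Set.subset_insert _ _).trans hT2, hT3, hT4, hT5⟩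
    · -- Case B : adjoin an orthogonal vector
      push_neg at hA
      have hB : ∀ s ∈ S, polar Q s s = 0 → ∃ p ∈ C, s = p.1 ∨ s = p.2 := by
        intro s hs hiso
        obtain ⟨p, hp, hor⟩ := hA s hs hiso
        rcases eq_or_ne p.1 s with h | h
        · exact ⟨p, hp, Or.inl h.symm⟩
        · exact ⟨p, hp, Or.inr (hor h).symm⟩
      obtain ⟨w, hwW, hworth⟩ := exists_orth_notmem Q hnd hgen hB htop
      have hwS : w ∉ S := fun h => hwW (Submodule.subset_span h)
      have hgen' : IsGenOrthSet Q (insert w S) C := by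
        refine ⟨?_, hgen.2.1, ?_⟩
        · intro p hp
          obtain ⟨h1, h2, h3, h4, h5, h6⟩ := hgen.1 p hp
          exact ⟨Set.mem_insert_iff.mpr (Or.inr h1),
            Set.mem_insert_iff.mpr (Or.inr h2), h3, h4, h5, h6⟩
        · intro u hu v hv hne hnc1 hnc2
          rcases Set.mem_insert_iff.mp hu with hu' | hu' <;>
            rcases Set.mem_insert_iff.mp hv with hv' | hv'
          · exact absurd (hu'.trans hv'.symm) hne
          · rw [hu']; exact hworth v hv'
          · rw [hv']; exact (polar_comm _ _ _).trans (hworth u hu')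
          · exact hgen.2.2 u hu' v hv' hne hnc1 hnc2

      have hind' : LinearIndependent K (fun b : (insert w S : Set V) => (b : V)) :=
        LinearIndepOn.id_insert hind hwW
      have hlt : Module.finrank K (Submodule.span K S) <
          Module.finrank K (Submodule.span K (insert w S)) := by
        apply Submodule.finrank_lt_finrank_of_lt
        refine lt_of_le_of_ne (Submodule.span_mono (Set.subset_insert _ _)) ?_
        intro h
        exact hwW (h ▸ Submodule.subset_span (Set.mem_insert _ _))
      have hle' : Module.finrank K V -
          Module.finrank K (Submodule.span K (insert w S)) ≤ n := by
        have := Submodule.finrank_le (Submodule.span K (insert w S : Set V))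
        omega
      obtain ⟨T, C'', hT1, hT2, hT3, hT4, hT5⟩ := ih (insert w S) C hind' hgen' hle'
      exact ⟨T, C'', (Set.subset_insert _ _).trans hT1, hT2, hT3, hT4, hT5⟩
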